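/- arXiv:2210.11355 — 3 statements merged into one kernel-verified Lean document; each statement's English description precedes it below -/
import Mathlib

section
/- Let T₀, T₁, I be positive integers, X ∈ ℝ^{T₀×I}, W ∈ ℝ^{T₁×I}, λ ∈ ℝ^{I}, and z = X·λ ∈ ℝ^{T₀}. Assume rowspace(W) ⊆ rowspace(X), and let G ∈ ℝ^{I×T₀} be any generalized inverse of X, i.e., a matrix satisfying X·G·X = X (in particular, the Moore–Penrose pseudoinverse is one). Then W·G·z = W·λ; consequently, for every vector w ∈ ℝ^{T₁}, wᵀ·W·G·z = wᵀ·W·λ. -/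
open Matrix

/-- The row space of a real matrix: the linear span of its rows. -/
def rowSpace {m n : Type*} (M : Matrix m n ℝ) : Submodule ℝ (n → ℝ) :=
  Submodule.span ℝ (Set.range M)

/-- Identification formula, Theorem 1 of the paper.
If `z = X·λ`, `rowspace(W) ⊆ rowspace(X)`, and `G` is any generalized inverse of `X`
(i.e. `X·G·X = X`), then `W·G·z = W·λ`, and hence `wᵀ·W·G·z = wᵀ·W·λ` for every `w`. -/
theorem stmt0 {T₀ T₁ I : ℕ} (hT₀ : 0 < T₀) (hT₁ : 0 < T₁) (hI : 0 < I)
    (X : Matrix (Fin T₀) (Fin I) ℝ) (W : Matrix (Fin T₁) (Fin I) ℝ)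
    (lam : Fin I → ℝ) (z : Fin T₀ → ℝ) (hz : z = X.mulVec lam)
    (hrow : rowSpace W ≤ rowSpace X)
    (G : Matrix (Fin I) (Fin T₀) ℝ) (hG : X * G * X = X) :
    W.mulVec (G.mulVec z) = W.mulVec lam ∧
      ∀ w : Fin T₁ → ℝ, w ⬝ᵥ W.mulVec (G.mulVec z) = w ⬝ᵥ W.mulVec lam := by
  -- Extract a matrix A with W = A * X from the rowspace inclusion.
  have hA : ∃ A : Matrix (Fin T₁) (Fin T₀) ℝ, W = A * X := by
    have hc : ∀ i : Fin T₁, ∃ c : Fin T₀ → ℝ, ∑ k, c k • X k = W i := by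
      intro i
      have : W i ∈ rowSpace X := hrow (Submodule.subset_span ⟨i, rfl⟩)
      exact (Finsupp.mem_span_range_iff_exists_finsupp.mp this).elim
        (fun c hc => ⟨c, by simpa [Finsupp.sum_fintype] using hc⟩)
    choose c hc using hc
    refine ⟨Matrix.of c, ?_⟩
    ext i j
    have := congrFun (hc i) j
    simpa [Matrix.mul_apply, Finset.sum_apply, Pi.smul_apply, smul_eq_mul] using this.symm
  obtain ⟨A, hW⟩ := hA
  have key : W.mulVec (G.mulVec z) = W.mulVec lam := by
    rw [hz, hW, Matrix.mulVec_mulVec, Matrix.mulVec_mulVec,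
        Matrix.mul_assoc A X G, Matrix.mul_assoc A (X * G) X, hG]
  exact ⟨key, fun w => by rw [key]⟩
end

section
/- Fix integers D ≥ 2, K ≥ 1, T̄ ≥ 1; set T' = ⌈K/(D−1)⌉ and T_pre = T'·T̄. For a color k ∈ {0,…,K−1} let block(k) = ⌊k/(D−1)⌋ and res(k) = k mod (D−1). Given a coloring c : {1,…,N} → {0,…,K−1}, define treatments A(i,t) ∈ {1,…,D} for t ∈ {1,…,T_pre} by: A(i,t) = res(c(i)) + 2 if block(c(i)) equals the period index ⌊(t−1)/T̄⌋, and A(i,t) = 1 otherwise. Define the indicator matrix B ∈ {0,1}^{N×(T_pre·D)} by B[i,(t,a)] = 1 if and only if A(i,t) = a. Then for every subset S ⊆ {1,…,N} of units whose colors are pairwise distinct, the rows of B indexed by S are linearly independent over ℝ; i.e., B[S,:] has full row rank |S|. -/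
/-- core of Lemma 1 of the paper: the experiment design passes the
first requirement of the `TrainingTreatmentTest`.
Under the coloring-based design with `D ≥ 2` treatments, `K ≥ 1` colors,
block length `T̄ ≥ 1`, `T' = ⌈K/(D−1)⌉` periods and `T_pre = T'·T̄` training measurements
(indexed here by `t : Fin T_pre`, zero-based, so the period of `t` is `⌊t/T̄⌋`),
the `0/1`-indicator rows `B i = (𝟙{A(i,t) = a})_{(t,a)}` of any set `S` of units with
pairwise distinct colors are linearly independent over `ℝ`. -/
theorem stmt9 {D K N Tbar : ℕ} (hD : 2 ≤ D) (hK : 1 ≤ K) (hTbar : 1 ≤ Tbar)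
    (T' Tpre : ℕ) (hT' : T' = ⌈(K : ℝ) / ((D : ℝ) - 1)⌉₊) (hTpre : Tpre = T' * Tbar)
    (c : Fin N → Fin K)
    (A : Fin N → Fin Tpre → ℕ)
    (hA : ∀ i t, A i t =
      if (c i : ℕ) / (D - 1) = (t : ℕ) / Tbar then (c i : ℕ) % (D - 1) + 2 else 1)
    (B : Fin N → Fin Tpre × Fin D → ℝ)
    (hB : ∀ i p, B i p = if A i p.1 = (p.2 : ℕ) + 1 then 1 else 0)
    (S : Finset (Fin N)) (hS : Set.InjOn c S) :
    LinearIndependent ℝ (fun i : S => B i) := by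
  rw [linearIndependent_iff']
  intro s g hsum i hi
  have hD1 : 0 < D - 1 := by omega
  have hblk : (c i : ℕ) / (D - 1) < T' := by
    have hceil : (K : ℝ) / ((D : ℝ) - 1) ≤ T' := by rw [hT']; exact Nat.le_ceil _
    have hd : ((D : ℝ) - 1) = ((D - 1 : ℕ) : ℝ) := by
      rw [Nat.cast_sub (by omega : 1 ≤ D)]; norm_num
    have hdpos : (0 : ℝ) < (D : ℝ) - 1 := by rw [hd]; exact_mod_cast hD1
    have hK' : (K : ℕ) ≤ T' * (D - 1) := by
      have h2 := (div_le_iff₀ hdpos).mp hceil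
      rw [hd] at h2
      exact_mod_cast h2
    have hlt : (c i : ℕ) < T' * (D - 1) := lt_of_lt_of_le (c ↑i).2 hK'
    exact (Nat.div_lt_iff_lt_mul hD1).mpr hlt
  set b := (c i : ℕ) / (D - 1) with hb
  set r := (c i : ℕ) % (D - 1) with hr
  have ht : b * Tbar < Tpre := by
    rw [hTpre]
    exact Nat.mul_lt_mul_of_lt_of_le hblk le_rfl (by omega)
  have ha : r + 1 < D := by
    have := Nat.mod_lt (c ↑i : ℕ) hD1
    omega
  set t : Fin Tpre := ⟨b * Tbar, ht⟩ with hts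
  set a : Fin D := ⟨r + 1, ha⟩ with has
  have htdiv : ((t : ℕ)) / Tbar = b := by
    simp only [hts]
    exact Nat.mul_div_cancel b (by omega)
  have hsum' := congrFun hsum (t, a)
  simp only [Finset.sum_apply, Pi.smul_apply, smul_eq_mul, Pi.zero_apply] at hsum'
  rw [Finset.sum_eq_single i] at hsum'
  · have hBi : B ↑i (t, a) = 1 := by
      rw [hB, hA, htdiv]
      simp [has]
      rw [if_pos hb.symm]
    rw [hBi, mul_one] at hsum'
    exact hsum'
  · intro j hjs hji
    have hcne : c ↑j ≠ c ↑i := by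
      intro h
      exact hji (Subtype.ext (hS j.2 i.2 h))
    have hBj : B ↑j (t, a) = 0 := by
      rw [hB, hA, htdiv]
      by_cases hbj : (c ↑j : ℕ) / (D - 1) = b
      · rw [if_pos hbj]
        have hrne : (c ↑j : ℕ) % (D - 1) ≠ r := by
          intro hre
          apply hcne
          have h1 := Nat.div_add_mod (c ↑j : ℕ) (D - 1)
          have h2 := Nat.div_add_mod (c ↑i : ℕ) (D - 1)
          have : (c ↑j : ℕ) = (c ↑i : ℕ) := by
            rw [← h1, ← h2, hbj, hre]
          exact Fin.ext this
        simp only [has]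
        rw [if_neg (by omega)]
      · rw [if_neg hbj]
        simp only [has]
        rw [if_neg (by omega)]
    rw [hBj, mul_zero]
  · intro h
    exact absurd hi h
end

section
/- Let H_pre ∈ ℝ^{p×m} and H_post ∈ ℝ^{q×m} satisfy rowspace(H_post) ⊆ rowspace(H_pre); let r ≥ 1 be an integer, let W_pre ∈ ℝ^{T₀×rp} be a matrix with linearly independent columns, and let W_post ∈ ℝ^{T₁×rq} be arbitrary. Then rowspace(W_post·(H_post ⊗ I_r)) ⊆ rowspace(W_pre·(H_pre ⊗ I_r)). -/
open Matrix Kronecker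

/-- Each row of `A * B` lies in the span of the rows of `B`. -/
lemma rowSpace_mul_le {a b c : Type*} [Fintype b] (A : Matrix a b ℝ) (B : Matrix b c ℝ) :
    rowSpace (A * B) ≤ rowSpace B := by
  rw [rowSpace, Submodule.span_le]
  rintro _ ⟨i, rfl⟩
  rw [rowSpace, show Set.range B = Set.range B.row from rfl, ← range_vecMulLinear]
  exact ⟨A i, by ext j; simp [Matrix.vecMul, Matrix.mul_apply, dotProduct]⟩

/-- If `L * W = 1`, then `rowSpace M ≤ rowSpace (W * M)`. -/
lemma rowSpace_le_of_leftInv {a b c : Type*} [Fintype a] [Fintype b] [DecidableEq b]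
    (W : Matrix a b ℝ) (L : Matrix b a ℝ) (hL : L * W = 1)
    (M : Matrix b c ℝ) : rowSpace M ≤ rowSpace (W * M) := by
  have : M = L * (W * M) := by rw [← Matrix.mul_assoc, hL, Matrix.one_mul]
  conv_lhs => rw [this]
  exact rowSpace_mul_le L (W * M)

/-- Kronecker product with identity preserves rowspace inclusion. -/
lemma rowSpace_kron_one_le {p q m r : ℕ}
    (Hpre : Matrix (Fin p) (Fin m) ℝ) (Hpost : Matrix (Fin q) (Fin m) ℝ)
    (hH : rowSpace Hpost ≤ rowSpace Hpre) :
    rowSpace (Hpost ⊗ₖ (1 : Matrix (Fin r) (Fin r) ℝ)) ≤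
      rowSpace (Hpre ⊗ₖ (1 : Matrix (Fin r) (Fin r) ℝ)) := by
  rw [rowSpace, Submodule.span_le]
  rintro _ ⟨⟨i, s⟩, rfl⟩
  have hi : Hpost i ∈ rowSpace Hpre := hH (Submodule.subset_span ⟨i, rfl⟩)
  rw [rowSpace] at hi; replace hi := (Submodule.mem_span_range_iff_exists_fun ℝ).1 hi
  obtain ⟨c, hc⟩ := hi
  rw [SetLike.mem_coe, rowSpace]; refine (Submodule.mem_span_range_iff_exists_fun ℝ).2 ?_
  refine ⟨fun ks => if ks.2 = s then c ks.1 else 0, ?_⟩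
  ext ⟨j, t⟩
  have := congr_fun hc j
  simp only [Finset.sum_apply, Pi.smul_apply, smul_eq_mul] at this ⊢
  rw [Fintype.sum_prod_type]
  simp only [Matrix.kroneckerMap_apply, Matrix.one_apply]
  by_cases hst : s = t
  · subst hst
    rw [if_pos rfl, mul_one, ← this]
    refine Finset.sum_congr rfl fun k _ => ?_
    rw [Finset.sum_eq_single s (fun b _ hb => by simp [hb]) (by simp)]
    simp
  · rw [if_neg hst, mul_zero]
    apply Finset.sum_eq_zero
    intro k _
    apply Finset.sum_eq_zero
    intro u _
    by_cases hu : u = s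
    · subst hu; simp [hst]
    · simp [hu]

/-- Linearly independent columns give a left inverse matrix. -/
lemma exists_left_inverse {a b : Type*} [Fintype a] [Fintype b] [DecidableEq a] [DecidableEq b]
    (W : Matrix a b ℝ) (hW : LinearIndependent ℝ Wᵀ) :
    ∃ L : Matrix b a ℝ, L * W = 1 := by
  have hinj : Function.Injective W.mulVecLin := by
    rw [Matrix.coe_mulVecLin]
    intro x y hxy
    have : Wᵀ.vecMul x = Wᵀ.vecMul y := by
      ext j
      have := congr_fun hxy j
      simpa [Matrix.vecMul, Matrix.mulVec, dotProduct, Matrix.transpose_apply,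
        mul_comm] using this
    exact Matrix.vecMul_injective_iff.mpr hW this
  obtain ⟨g, hg⟩ := W.mulVecLin.exists_leftInverse_of_injective
    (LinearMap.ker_eq_bot.mpr hinj)
  refine ⟨LinearMap.toMatrix' g, ?_⟩
  have : LinearMap.toMatrix' (g ∘ₗ W.mulVecLin) = LinearMap.toMatrix' g * W := by
    rw [LinearMap.toMatrix'_comp, ← Matrix.toLin'_apply', LinearMap.toMatrix'_toLin']
  rw [← this, hg, LinearMap.toMatrix'_id]

/-- deterministic core of Proposition 2 of the paper.
If `rowspace(H_post) ⊆ rowspace(H_pre)`, `W_pre` has linearly independent columns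
(equivalently, the rows of `W_preᵀ` are linearly independent), and `W_post` is
arbitrary, then `rowspace(W_post·(H_post ⊗ I_r)) ⊆ rowspace(W_pre·(H_pre ⊗ I_r))`. -/
theorem stmt11 {p q m r T₀ T₁ : ℕ} (hr : 1 ≤ r)
    (Hpre : Matrix (Fin p) (Fin m) ℝ) (Hpost : Matrix (Fin q) (Fin m) ℝ)
    (hH : rowSpace Hpost ≤ rowSpace Hpre)
    (Wpre : Matrix (Fin T₀) (Fin p × Fin r) ℝ)
    (hW : LinearIndependent ℝ Wpreᵀ)
    (Wpost : Matrix (Fin T₁) (Fin q × Fin r) ℝ) :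
    rowSpace (Wpost * (Hpost ⊗ₖ (1 : Matrix (Fin r) (Fin r) ℝ))) ≤
      rowSpace (Wpre * (Hpre ⊗ₖ (1 : Matrix (Fin r) (Fin r) ℝ))) := by
  obtain ⟨L, hL⟩ := exists_left_inverse Wpre hW
  calc rowSpace (Wpost * (Hpost ⊗ₖ (1 : Matrix (Fin r) (Fin r) ℝ)))
      ≤ rowSpace (Hpost ⊗ₖ (1 : Matrix (Fin r) (Fin r) ℝ)) := rowSpace_mul_le _ _
    _ ≤ rowSpace (Hpre ⊗ₖ (1 : Matrix (Fin r) (Fin r) ℝ)) := rowSpace_kron_one_le _ _ hH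
    _ ≤ rowSpace (Wpre * (Hpre ⊗ₖ (1 : Matrix (Fin r) (Fin r) ℝ))) :=
        rowSpace_le_of_leftInv Wpre L hL _
end
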